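/- Consider the tree-knapsack LP: given a finite rooted tree Γ with non-root node set N, values α_v ≥ 0, weights β_v ≥ 0, and budget B ≥ 0, maximize Σ_v α_v x_v subject to x_v ≤ x_u for every node v and every child u of v, Σ_v β_v x_v ≤ B, and 0 ≤ x_v ≤ 1. If x̄ is an extreme point (vertex) of this polytope, then at most one child v of the root r has the property that the subtree rooted at v contains a node w with 0 < x̄_w < 1. -/

import Mathlib

open Finset

/-- Extreme points of the tree-knapsack polytope: at most one child of the root has a
fractional node in its subtree. The rooted tree is given by a `parent` map on a finite
node type `ι` with root `r` (with `parent r = r`, and every node reaching `r` by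
iterating `parent`); the LP variables are indexed by the non-root nodes. -/
theorem stmt3 {ι : Type*} [Fintype ι] [DecidableEq ι]
    (r : ι) (parent : ι → ι) (hroot : parent r = r)
    (htree : ∀ v : ι, ∃ n : ℕ, parent^[n] v = r)
    (α β : {v : ι // v ≠ r} → ℝ) (hα : ∀ v, 0 ≤ α v) (hβ : ∀ v, 0 ≤ β v)
    (B : ℝ) (hB : 0 ≤ B)
    (P : Set ({v : ι // v ≠ r} → ℝ))
    (hP : P = {x | (∀ v, 0 ≤ x v ∧ x v ≤ 1) ∧
      (∀ v u : {v : ι // v ≠ r}, parent u.1 = v.1 → x v ≤ x u) ∧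
      ∑ v : {v : ι // v ≠ r}, β v * x v ≤ B})
    (xbar : {v : ι // v ≠ r} → ℝ) (hxbar : xbar ∈ Set.extremePoints ℝ P) :
    ∀ v₁ v₂ : ι, v₁ ≠ r → v₂ ≠ r → parent v₁ = r → parent v₂ = r →
      (∃ w₁ : {v : ι // v ≠ r}, (∃ n : ℕ, parent^[n] w₁.1 = v₁) ∧
        0 < xbar w₁ ∧ xbar w₁ < 1) →
      (∃ w₂ : {v : ι // v ≠ r}, (∃ n : ℕ, parent^[n] w₂.1 = v₂) ∧
        0 < xbar w₂ ∧ xbar w₂ < 1) →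
      v₁ = v₂ := by
  classical
  rintro v₁ v₂ hv₁ hv₂ hp₁ hp₂ ⟨w₁, hw₁sub, hw₁0, hw₁1⟩ ⟨w₂, hw₂sub, hw₂0, hw₂1⟩
  by_contra hne
  haveI : Nonempty {v : ι // v ≠ r} := ⟨w₁⟩
  -- basic facts about xbar
  have hxP := hxbar.1
  rw [hP] at hxP
  obtain ⟨hx01, hxord, hxB⟩ := hxP
  -- iterating parent from a child of the root stays at the root
  have iterroot : ∀ (v : ι), parent v = r → ∀ k : ℕ, parent^[k + 1] v = r := by
    intro v hv k
    induction k with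
    | zero => simpa using hv
    | succ k ih => rw [Function.iterate_succ_apply', ih, hroot]
  -- subtrees of distinct children of the root are disjoint
  have disj : ∀ u : ι, (∃ n, parent^[n] u = v₁) → (∃ m, parent^[m] u = v₂) → False := by
    intro u h1 h2
    have aux : ∀ (a b : ι), parent a = r → b ≠ r →
        ∀ n m : ℕ, n ≤ m → parent^[n] u = a → parent^[m] u = b → a = b := by
      intro a b hpa hbr n m hnm hn hm
      obtain ⟨k, rfl⟩ : ∃ k, m = n + k := ⟨m - n, by omega⟩
      rw [Nat.add_comm, Function.iterate_add_apply, hn] at hm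
      cases k with
      | zero => exact hm
      | succ k => exact absurd (by rw [iterroot a hpa k] at hm; exact hm.symm) hbr
    obtain ⟨n, hn⟩ := h1
    obtain ⟨m, hm⟩ := h2
    rcases le_total n m with h | h
    · exact hne (aux v₁ v₂ hp₁ hv₂ n m h hn hm)
    · exact hne ((aux v₂ v₁ hp₂ hv₁ m n h hm hn).symm)
  -- the adjacency-with-equal-value relation
  set rel : {v : ι // v ≠ r} → {v : ι // v ≠ r} → Prop :=
    fun a b => (parent a.1 = b.1 ∨ parent b.1 = a.1) ∧ xbar a = xbar b with hrel
  have relsymm : ∀ a b, rel a b → rel b a := fun a b h => ⟨h.1.symm, h.2.symm⟩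
  -- a rel-step stays within the subtree of a child of the root
  have subclosed : ∀ (v : ι), parent v = r →
      ∀ a b : {x : ι // x ≠ r}, rel a b →
        (∃ n, parent^[n] a.1 = v) → ∃ n, parent^[n] b.1 = v := by
    rintro v hpv a b ⟨hadj | hadj, -⟩ ⟨n, hn⟩
    · cases n with
      | zero =>
        exfalso
        simp only [Function.iterate_zero, id_eq] at hn
        exact b.2 (by rw [← hadj, hn, hpv])
      | succ k =>
        exact ⟨k, by rw [Function.iterate_succ_apply, hadj] at hn; exact hn⟩
    · exact ⟨n + 1, by rw [Function.iterate_succ_apply, hadj, hn]⟩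
  have subRTG : ∀ (v : ι), parent v = r →
      ∀ a b, Relation.ReflTransGen rel a b →
        (∃ n, parent^[n] a.1 = v) → ∃ n, parent^[n] b.1 = v := by
    intro v hpv a b hab
    induction hab with
    | refl => exact id
    | tail h1 h2 ih => exact fun ha => subclosed v hpv _ _ h2 (ih ha)
  -- the value is constant along a rel-path
  have valconst : ∀ (w b), Relation.ReflTransGen rel w b → xbar b = xbar w := by
    intro w b h
    induction h with
    | refl => rfl
    | tail h1 h2 ih => exact h2.2.symm.trans ih
  -- membership in the component is invariant along rel-edges
  have hiff : ∀ (w p c), rel p c →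
      (Relation.ReflTransGen rel w p ↔ Relation.ReflTransGen rel w c) :=
    fun w p c h => ⟨fun hp => hp.tail h, fun hc => hc.tail (relsymm _ _ h)⟩
  -- the two components
  set S₁ : Finset {v : ι // v ≠ r} :=
    univ.filter (fun u => Relation.ReflTransGen rel w₁ u) with hS₁
  set S₂ : Finset {v : ι // v ≠ r} :=
    univ.filter (fun u => Relation.ReflTransGen rel w₂ u) with hS₂
  have memS₁ : ∀ u, u ∈ S₁ ↔ Relation.ReflTransGen rel w₁ u := by
    intro u; simp [hS₁]
  have memS₂ : ∀ u, u ∈ S₂ ↔ Relation.ReflTransGen rel w₂ u := by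
    intro u; simp [hS₂]
  have hsub₁ : ∀ u, u ∈ S₁ → ∃ n, parent^[n] u.1 = v₁ :=
    fun u hu => subRTG v₁ hp₁ w₁ u ((memS₁ u).1 hu) hw₁sub
  have hsub₂ : ∀ u, u ∈ S₂ → ∃ n, parent^[n] u.1 = v₂ :=
    fun u hu => subRTG v₂ hp₂ w₂ u ((memS₂ u).1 hu) hw₂sub
  have hdisjS : ∀ u, u ∈ S₁ → u ∈ S₂ → False :=
    fun u h1 h2 => disj u.1 (hsub₁ u h1) (hsub₂ u h2)
  have hw₁S₁ : w₁ ∈ S₁ := (memS₁ w₁).2 Relation.ReflTransGen.refl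
  have hw₂S₂ : w₂ ∈ S₂ := (memS₂ w₂).2 Relation.ReflTransGen.refl
  -- values are fractional on S₁ and S₂
  have hval₁ : ∀ u, u ∈ S₁ → xbar u = xbar w₁ :=
    fun u hu => valconst w₁ u ((memS₁ u).1 hu)
  have hval₂ : ∀ u, u ∈ S₂ → xbar u = xbar w₂ :=
    fun u hu => valconst w₂ u ((memS₂ u).1 hu)
  -- the perturbation coefficients
  set b₁ : ℝ := ∑ u ∈ S₁, β u with hb₁
  set b₂ : ℝ := ∑ u ∈ S₂, β u with hb₂
  set c₁ : ℝ := if b₁ = 0 then 1 else if b₂ = 0 then 0 else b₂ with hc₁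
  set c₂ : ℝ := if b₁ = 0 then 0 else if b₂ = 0 then 1 else b₁ with hc₂
  have hb₁0 : 0 ≤ b₁ := Finset.sum_nonneg fun u _ => hβ u
  have hb₂0 : 0 ≤ b₂ := Finset.sum_nonneg fun u _ => hβ u
  have hc₁0 : 0 ≤ c₁ := by
    rw [hc₁]; split_ifs <;> linarith
  have hc₂0 : 0 ≤ c₂ := by
    rw [hc₂]; split_ifs <;> linarith
  have hcc : c₁ * b₁ = c₂ * b₂ := by
    rw [hc₁, hc₂]; split_ifs with h1 h2
    · rw [h1]; ring
    · rw [h2]; ring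
    · ring
  have hcpos : 0 < c₁ + c₂ := by
    rw [hc₁, hc₂]; split_ifs with h1 h2
    · norm_num
    · norm_num
    · have : 0 < b₁ := lt_of_le_of_ne hb₁0 (Ne.symm h1)
      have : 0 < b₂ := lt_of_le_of_ne hb₂0 (Ne.symm h2)
      linarith
  set M : ℝ := c₁ + c₂ with hM
  -- the perturbation direction
  set d : {v : ι // v ≠ r} → ℝ :=
    fun u => (if u ∈ S₁ then c₁ else 0) - (if u ∈ S₂ then c₂ else 0) with hd
  have hdabs : ∀ u, |d u| ≤ M := by
    intro u
    simp only [hd, hM]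
    split_ifs <;> rw [abs_le] <;> constructor <;> linarith
  have hdsum : ∑ u, β u * d u = 0 := by
    have step : ∀ u : {v : ι // v ≠ r},
        β u * d u = (if u ∈ S₁ then β u * c₁ else 0) - (if u ∈ S₂ then β u * c₂ else 0) := by
      intro u; simp only [hd]; split_ifs <;> ring
    rw [Finset.sum_congr rfl (fun u _ => step u), Finset.sum_sub_distrib,
      ← Finset.sum_filter, ← Finset.sum_filter]
    have e1 : univ.filter (· ∈ S₁) = S₁ := by
      ext u; simp
    have e2 : univ.filter (· ∈ S₂) = S₂ := by
      ext u; simp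
    rw [e1, e2, ← Finset.sum_mul, ← Finset.sum_mul, ← hb₁, ← hb₂]
    rw [mul_comm b₁ c₁, mul_comm b₂ c₂] at *
    linarith [hcc]
  -- d is equal on endpoints of an equal-value edge
  have hdedge : ∀ p c : {v : ι // v ≠ r}, parent c.1 = p.1 → xbar p = xbar c → d p = d c := by
    intro p c hpc hval
    have hrpc : rel p c := ⟨Or.inr hpc, hval⟩
    have h1 : p ∈ S₁ ↔ c ∈ S₁ := by rw [memS₁, memS₁]; exact hiff w₁ p c hrpc
    have h2 : p ∈ S₂ ↔ c ∈ S₂ := by rw [memS₂, memS₂]; exact hiff w₂ p c hrpc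
    simp only [hd]
    by_cases hp1 : p ∈ S₁ <;> by_cases hp2 : p ∈ S₂ <;>
      simp [hp1, hp2, h1.1, (not_iff_not.2 h1).1, h2.1, (not_iff_not.2 h2).1] <;>
      simp_all
  -- the epsilons
  set f : {v : ι // v ≠ r} → ℝ :=
    fun u => if u ∈ S₁ ∪ S₂ then min (xbar u) (1 - xbar u) else 1 with hf
  set g : {v : ι // v ≠ r} → {v : ι // v ≠ r} → ℝ :=
    fun p c => if parent c.1 = p.1 ∧ xbar p ≠ xbar c then xbar c - xbar p else 1 with hg
  have hfpos : ∀ u, 0 < f u := by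
    intro u
    simp only [hf]
    split_ifs with h
    · rcases Finset.mem_union.1 h with h | h
      · rw [hval₁ u h]; exact lt_min hw₁0 (by linarith)
      · rw [hval₂ u h]; exact lt_min hw₂0 (by linarith)
    · norm_num
  have hgpos : ∀ p c, 0 < g p c := by
    intro p c
    simp only [hg]
    split_ifs with h
    · have := hxord p c h.1
      have := lt_of_le_of_ne this h.2
      linarith
    · norm_num
  set ε₁ : ℝ := Finset.univ.inf' Finset.univ_nonempty f with hε₁
  set ε₂ : ℝ := Finset.univ.inf'
    (Finset.univ_nonempty (α := {v : ι // v ≠ r} × {v : ι // v ≠ r}))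
    (fun pc => g pc.1 pc.2) with hε₂
  have hε₁pos : 0 < ε₁ := by
    rw [hε₁, Finset.lt_inf'_iff]; exact fun u _ => hfpos u
  have hε₂pos : 0 < ε₂ := by
    rw [hε₂, Finset.lt_inf'_iff]; exact fun pc _ => hgpos pc.1 pc.2
  have hε₁le : ∀ u, ε₁ ≤ f u := fun u => Finset.inf'_le f (Finset.mem_univ u)
  have hε₂le : ∀ p c, ε₂ ≤ g p c :=
    fun p c => Finset.inf'_le (fun pc => g pc.1 pc.2) (Finset.mem_univ (p, c))
  set ε : ℝ := min ε₁ ε₂ / (2 * M) with hε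
  have hεpos : 0 < ε := by
    rw [hε]
    apply div_pos (lt_min hε₁pos hε₂pos) (by linarith)
  have hεM : 2 * (ε * M) = min ε₁ ε₂ := by
    rw [hε]; field_simp
  -- the main claim: small perturbations along d stay in P
  have main : ∀ t : ℝ, |t| ≤ ε → (fun u => xbar u + t * d u) ∈ P := by
    intro t ht
    have htd : ∀ u, |t * d u| ≤ ε * M := by
      intro u
      rw [abs_mul]
      exact mul_le_mul ht (hdabs u) (abs_nonneg _) (le_of_lt hεpos)
    have hεMle : ε * M ≤ min ε₁ ε₂ := by
      have h0 : 0 < min ε₁ ε₂ := lt_min hε₁pos hε₂pos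
      linarith
    rw [hP]
    simp only [Set.mem_setOf_eq]
    refine ⟨?_, ?_, ?_⟩
    · intro u
      show 0 ≤ xbar u + t * d u ∧ xbar u + t * d u ≤ 1
      by_cases hu : u ∈ S₁ ∪ S₂
      · have h1 : ε * M ≤ f u := le_trans (le_trans hεMle (min_le_left _ _)) (hε₁le u)
        have h2 : |t * d u| ≤ f u := le_trans (htd u) h1
        have h3 : f u = min (xbar u) (1 - xbar u) := by simp only [hf, if_pos hu]
        rw [h3] at h2
        rw [abs_le] at h2
        constructor
        · have := min_le_left (xbar u) (1 - xbar u); linarith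
        · have := min_le_right (xbar u) (1 - xbar u); linarith
      · have : d u = 0 := by
          simp only [hd]
          simp only [Finset.mem_union, not_or] at hu
          simp [hu.1, hu.2]
        rw [this]
        simpa using hx01 u
    · intro p c hpc
      show xbar p + t * d p ≤ xbar c + t * d c
      by_cases hval : xbar p = xbar c
      · rw [hdedge p c hpc hval, hval]
      · have hlt : xbar p < xbar c := lt_of_le_of_ne (hxord p c hpc) hval
        have hgap : 2 * (ε * M) ≤ xbar c - xbar p := by
          rw [hεM]
          calc min ε₁ ε₂ ≤ ε₂ := min_le_right _ _
            _ ≤ g p c := hε₂le p c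
            _ = xbar c - xbar p := by simp only [hg]; rw [if_pos ⟨hpc, hval⟩]
        have h1 := htd p
        have h2 := htd c
        have h3 : t * d p ≤ |t * d p| := le_abs_self _
        have h4 : -(t * d c) ≤ |t * d c| := neg_le_abs _
        linarith
    · have : ∑ u : {v : ι // v ≠ r}, β u * (xbar u + t * d u)
          = (∑ u, β u * xbar u) + t * ∑ u, β u * d u := by
        rw [Finset.mul_sum, ← Finset.sum_add_distrib]
        apply Finset.sum_congr rfl
        intro u _
        ring
      rw [this, hdsum]
      simpa using hxB
  -- derive the contradiction with extremality
  set x₁ : {v : ι // v ≠ r} → ℝ := fun u => xbar u + ε * d u with hx₁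
  set x₂ : {v : ι // v ≠ r} → ℝ := fun u => xbar u + (-ε) * d u with hx₂
  have hx₁P : x₁ ∈ P := main ε (le_of_eq (abs_of_pos hεpos))
  have hx₂P : x₂ ∈ P := main (-ε) (by rw [abs_neg]; exact le_of_eq (abs_of_pos hεpos))
  have hmid : xbar ∈ openSegment ℝ x₁ x₂ := by
    refine ⟨1/2, 1/2, by norm_num, by norm_num, by norm_num, ?_⟩
    funext u
    simp only [hx₁, hx₂, Pi.add_apply, Pi.smul_apply, smul_eq_mul]
    ring
  have heq := (hxbar.2 hx₁P hx₂P hmid)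
  -- but x₁ ≠ xbar since d is nonzero somewhere
  have hw₁S₂' : w₁ ∉ S₂ := fun h => disj w₁.1 hw₁sub (hsub₂ w₁ h)
  have hw₂S₁' : w₂ ∉ S₁ := fun h => disj w₂.1 (hsub₁ w₂ h) hw₂sub
  rcases (lt_or_ge 0 c₁) with hc | hc
  · have hd₁ : d w₁ = c₁ := by simp only [hd]; rw [if_pos hw₁S₁, if_neg hw₁S₂']; ring
    have h5 := congrFun heq w₁
    simp only [hx₁] at h5
    rw [hd₁] at h5
    nlinarith
  · have hc₂pos : 0 < c₂ := by linarith
    have hd₂ : d w₂ = -c₂ := by simp only [hd]; rw [if_pos hw₂S₂, if_neg hw₂S₁']; ring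
    have h5 := congrFun heq w₂
    simp only [hx₁] at h5
    rw [hd₂] at h5
    nlinarith
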